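/- In the simplified dictionary-LASSO setting with the block partition, writing W_{Xh,1} = ρ⁻_{X,Z⁺}(s+l) and W_{Xh,2} = 6·σ_min(Z)⁻¹·ρ⁺_{X,Z⁺}(s+l)·√(s/l), one has ‖Xh‖² ≥ W_{Xh,1}·‖Z⁺(Zh)_{T₀₁}‖² − W_{Xh,2}·‖Z⁺(Zh)_{T₀₁}‖·‖(Zh)_{T₀₁}‖, where T₀₁ = T₀ ∪ T₁. -/

import Mathlib

open scoped BigOperators
open Matrix MeasureTheory ProbabilityTheory

/-- Euclidean norm of a vector in `ℝ^n`. -/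
noncomputable def vnorm {n : ℕ} (v : Fin n → ℝ) : ℝ := Real.sqrt (∑ i, v i ^ 2)

/-- ℓ¹ norm. -/
noncomputable def vnorm1 {n : ℕ} (v : Fin n → ℝ) : ℝ := ∑ i, |v i|

/-- ℓ∞ norm. -/
noncomputable def vnormInf {n : ℕ} (v : Fin n → ℝ) : ℝ := ⨆ i, |v i|

/-- Restriction of a vector to an index set: coordinates outside `T` are set to zero. -/
noncomputable def restr {m : ℕ} (T : Finset (Fin m)) (w : Fin m → ℝ) : Fin m → ℝ :=
  fun i => if i ∈ T then w i else 0

/-- Support of a vector. -/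
noncomputable def suppSet {m : ℕ} (w : Fin m → ℝ) : Finset (Fin m) :=
  Finset.univ.filter (fun i => w i ≠ 0)

/-- `𝓗(Y, k)`: all vectors `Y v` with `v` having at most `k` nonzero coordinates. -/
noncomputable def sparseCone {q t : ℕ} (Y : Matrix (Fin q) (Fin t) ℝ) (k : ℕ) :
    Set (Fin q → ℝ) :=
  {w | ∃ v : Fin t → ℝ, (Finset.univ.filter fun i => v i ≠ 0).card ≤ k ∧ w = Y.mulVec v}

/-- `ρ⁺_{Ψ,Y}(k)` (the `l₁ = 0` version). -/
noncomputable def rhoPlus0 {n q t : ℕ} (Ψ : Matrix (Fin n) (Fin q) ℝ)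
    (Y : Matrix (Fin q) (Fin t) ℝ) (k : ℕ) : ℝ :=
  sSup {x | ∃ w ∈ sparseCone Y k, w ≠ 0 ∧ x = vnorm (Ψ.mulVec w) ^ 2 / vnorm w ^ 2}

/-- `ρ⁻_{Ψ,Y}(k)` (the `l₁ = 0` version). -/
noncomputable def rhoMinus0 {n q t : ℕ} (Ψ : Matrix (Fin n) (Fin q) ℝ)
    (Y : Matrix (Fin q) (Fin t) ℝ) (k : ℕ) : ℝ :=
  sInf {x | ∃ w ∈ sparseCone Y k, w ≠ 0 ∧ x = vnorm (Ψ.mulVec w) ^ 2 / vnorm w ^ 2}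

/-- `ρ⁺_{Ψ,Y}(l₁, k)`. -/
noncomputable def rhoPlus {n l₁ q t : ℕ} (Ψ : Matrix (Fin n) (Fin (l₁ + q)) ℝ)
    (Y : Matrix (Fin q) (Fin t) ℝ) (k : ℕ) : ℝ :=
  sSup {x | ∃ (u : Fin l₁ → ℝ) (w : Fin q → ℝ), w ∈ sparseCone Y k ∧ Fin.append u w ≠ 0 ∧
    x = vnorm (Ψ.mulVec (Fin.append u w)) ^ 2 / vnorm (Fin.append u w) ^ 2}

/-- `ρ⁻_{Ψ,Y}(l₁, k)`. -/
noncomputable def rhoMinus {n l₁ q t : ℕ} (Ψ : Matrix (Fin n) (Fin (l₁ + q)) ℝ)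
    (Y : Matrix (Fin q) (Fin t) ℝ) (k : ℕ) : ℝ :=
  sInf {x | ∃ (u : Fin l₁ → ℝ) (w : Fin q → ℝ), w ∈ sparseCone Y k ∧ Fin.append u w ≠ 0 ∧
    x = vnorm (Ψ.mulVec (Fin.append u w)) ^ 2 / vnorm (Fin.append u w) ^ 2}

/-- Column concatenation `[P Q]`. -/
def hcat {n a b : ℕ} (P : Matrix (Fin n) (Fin a) ℝ) (Q : Matrix (Fin n) (Fin b) ℝ) :
    Matrix (Fin n) (Fin (a + b)) ℝ :=
  Matrix.of fun i => Fin.append (P i) (Q i)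

/-- Smallest singular value: `min_{‖v‖ = 1} ‖Z v‖`. -/
noncomputable def sigmaMin {m r : ℕ} (Z : Matrix (Fin m) (Fin r) ℝ) : ℝ :=
  sInf {x | ∃ v : Fin r → ℝ, vnorm v = 1 ∧ x = vnorm (Z.mulVec v)}

/-- Largest singular value: `max_{‖v‖ = 1} ‖Z v‖`. -/
noncomputable def sigmaMax {m r : ℕ} (Z : Matrix (Fin m) (Fin r) ℝ) : ℝ :=
  sSup {x | ∃ v : Fin r → ℝ, vnorm v = 1 ∧ x = vnorm (Z.mulVec v)}

section Basics

open Finset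

variable {k : ℕ}

lemma sum_sq_nonneg' (v : Fin k → ℝ) : 0 ≤ ∑ i, v i ^ 2 :=
  Finset.sum_nonneg fun i _ => sq_nonneg _

lemma vnorm_nonneg (v : Fin k → ℝ) : 0 ≤ vnorm v := Real.sqrt_nonneg _

lemma vnorm_sq (v : Fin k → ℝ) : vnorm v ^ 2 = ∑ i, v i ^ 2 :=
  Real.sq_sqrt (sum_sq_nonneg' v)

lemma dot_self_eq (v : Fin k → ℝ) : dotProduct v v = vnorm v ^ 2 := by
  rw [vnorm_sq]; exact Finset.sum_congr rfl fun i _ => (pow_two (v i)).symm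

lemma vnorm_zero : vnorm (0 : Fin k → ℝ) = 0 := by simp [vnorm]

lemma vnorm_eq_zero_iff {v : Fin k → ℝ} : vnorm v = 0 ↔ v = 0 := by
  constructor
  · intro hv
    have h0 : ∑ i, v i ^ 2 = 0 := Real.sqrt_eq_zero (sum_sq_nonneg' v) |>.mp hv
    funext i
    have := (Finset.sum_eq_zero_iff_of_nonneg (fun i _ => sq_nonneg (v i))).mp h0 i (Finset.mem_univ i)
    exact pow_eq_zero_iff (n := 2) (by norm_num) |>.mp this
  · rintro rfl; exact vnorm_zero

lemma vnorm_pos_of_ne {v : Fin k → ℝ} (hv : v ≠ 0) : 0 < vnorm v :=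
  lt_of_le_of_ne (vnorm_nonneg v) (fun hc => hv (vnorm_eq_zero_iff.mp hc.symm))

lemma abs_dot_le (u v : Fin k → ℝ) : |dotProduct u v| ≤ vnorm u * vnorm v := by
  have h := Finset.sum_mul_sq_le_sq_mul_sq Finset.univ u v
  have h2 : (dotProduct u v) ^ 2 ≤ (vnorm u * vnorm v) ^ 2 := by
    rw [mul_pow, vnorm_sq, vnorm_sq]; exact h
  have h3 := Real.sqrt_le_sqrt h2
  rwa [Real.sqrt_sq_eq_abs, Real.sqrt_sq (mul_nonneg (vnorm_nonneg u) (vnorm_nonneg v))] at h3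

lemma vnorm_add_sq (u v : Fin k → ℝ) :
    vnorm (u + v) ^ 2 = vnorm u ^ 2 + 2 * dotProduct u v + vnorm v ^ 2 := by
  simp only [vnorm_sq, dotProduct, Pi.add_apply]
  have : ∀ i : Fin k, (u i + v i) ^ 2 = u i ^ 2 + 2 * (u i * v i) + v i ^ 2 := fun i => by ring
  rw [Finset.sum_congr rfl fun i _ => this i, Finset.sum_add_distrib, Finset.sum_add_distrib,
    ← Finset.mul_sum]

lemma vnorm_smul (c : ℝ) (v : Fin k → ℝ) : vnorm (c • v) = |c| * vnorm v := by
  simp only [vnorm, Pi.smul_apply, smul_eq_mul, mul_pow]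
  rw [← Finset.mul_sum, Real.sqrt_mul (sq_nonneg c), Real.sqrt_sq_eq_abs]

/-- Hölder: |u ⬝ v| ≤ ‖u‖_∞ ‖v‖₁ -/
lemma abs_dot_le_inf_one (u v : Fin k → ℝ) (hk : 0 < k) :
    |dotProduct u v| ≤ vnormInf u * vnorm1 v := by
  have hbd : ∀ i : Fin k, |u i| ≤ vnormInf u := fun i =>
    le_ciSup (f := fun i => |u i|) (Set.Finite.bddAbove (Set.finite_range _)) i
  calc |dotProduct u v| ≤ ∑ i, |u i * v i| := Finset.abs_sum_le_sum_abs _ _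
    _ ≤ ∑ i, vnormInf u * |v i| := by
        refine Finset.sum_le_sum fun i _ => ?_
        rw [abs_mul]
        exact mul_le_mul_of_nonneg_right (hbd i) (abs_nonneg _)
    _ = vnormInf u * vnorm1 v := by rw [vnorm1, Finset.mul_sum]

lemma vnorm1_nonneg (v : Fin k → ℝ) : 0 ≤ vnorm1 v :=
  Finset.sum_nonneg fun i _ => abs_nonneg _

/-- Frobenius bound -/
lemma mulVec_sq_le {a b : ℕ} (A : Matrix (Fin a) (Fin b) ℝ) (w : Fin b → ℝ) :
    vnorm (A.mulVec w) ^ 2 ≤ (∑ i, ∑ j, A i j ^ 2) * vnorm w ^ 2 := by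
  rw [vnorm_sq, vnorm_sq, Finset.sum_mul]
  refine Finset.sum_le_sum fun i _ => ?_
  exact Finset.sum_mul_sq_le_sq_mul_sq Finset.univ (A i) w

end Basics
section Restr

variable {k : ℕ}

lemma restr_apply (T : Finset (Fin k)) (w : Fin k → ℝ) (i : Fin k) :
    restr T w i = if i ∈ T then w i else 0 := rfl

lemma vnorm1_restr (T : Finset (Fin k)) (w : Fin k → ℝ) :
    vnorm1 (restr T w) = ∑ i ∈ T, |w i| := by
  rw [vnorm1, ← Finset.sum_subset (Finset.subset_univ T)
    (fun i _ hi => by simp [restr, hi] : ∀ i ∈ Finset.univ, i ∉ T → |restr T w i| = 0)]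
  exact Finset.sum_congr rfl fun i hi => by simp [restr, hi]

lemma vnorm_sq_restr (T : Finset (Fin k)) (w : Fin k → ℝ) :
    vnorm (restr T w) ^ 2 = ∑ i ∈ T, w i ^ 2 := by
  rw [vnorm_sq, ← Finset.sum_subset (Finset.subset_univ T)
    (fun i _ hi => by simp [restr, hi] : ∀ i ∈ Finset.univ, i ∉ T → restr T w i ^ 2 = 0)]
  exact Finset.sum_congr rfl fun i hi => by simp [restr, hi]

lemma vnorm_restr_mono {T T' : Finset (Fin k)} (hT : T ⊆ T') (w : Fin k → ℝ) :
    vnorm (restr T w) ≤ vnorm (restr T' w) := by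
  have h : vnorm (restr T w) ^ 2 ≤ vnorm (restr T' w) ^ 2 := by
    rw [vnorm_sq_restr, vnorm_sq_restr]
    exact Finset.sum_le_sum_of_subset_of_nonneg hT fun i _ _ => sq_nonneg _
  have := Real.sqrt_le_sqrt h
  rwa [Real.sqrt_sq (vnorm_nonneg _), Real.sqrt_sq (vnorm_nonneg _)] at this

/-- ℓ¹–ℓ² bound on a set of given cardinality. -/
lemma vnorm1_restr_le (T : Finset (Fin k)) (w : Fin k → ℝ) :
    vnorm1 (restr T w) ≤ Real.sqrt (T.card : ℝ) * vnorm (restr T w) := by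
  have h : vnorm1 (restr T w) ^ 2 ≤ (T.card : ℝ) * vnorm (restr T w) ^ 2 := by
    rw [vnorm1_restr, vnorm_sq_restr]
    have := Finset.sum_mul_sq_le_sq_mul_sq T (fun _ => (1:ℝ)) (fun i => |w i|)
    simpa [Finset.sum_const, sq_abs] using this
  have h2 := Real.sqrt_le_sqrt h
  rwa [Real.sqrt_sq (vnorm1_nonneg _), Real.sqrt_mul (Nat.cast_nonneg _),
    Real.sqrt_sq (vnorm_nonneg _)] at h2

lemma suppSet_restr_subset (T : Finset (Fin k)) (w : Fin k → ℝ) :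
    (Finset.univ.filter fun i => restr T w i ≠ 0) ⊆ T := by
  intro i hi
  rw [Finset.mem_filter] at hi
  by_contra hc
  exact hi.2 (by simp [restr, hc])

end Restr
section Mat

variable {m r : ℕ}

lemma mulVec_inj_of_rank {Z : Matrix (Fin m) (Fin r) ℝ} (hZrank : Z.rank = r) :
    Function.Injective Z.mulVec := by
  have h2 : Module.finrank ℝ (LinearMap.range Z.mulVecLin) = r := hZrank
  have h1 := LinearMap.finrank_range_add_finrank_ker Z.mulVecLin
  rw [show Module.finrank ℝ (Fin r → ℝ) = r by simp, h2] at h1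
  have h3 : Module.finrank ℝ (LinearMap.ker Z.mulVecLin) = 0 := by omega
  have hker : LinearMap.ker Z.mulVecLin = ⊥ := Submodule.finrank_eq_zero.mp h3
  have := LinearMap.ker_eq_bot.mp hker
  intro x y hxy
  exact this hxy

lemma ZtZ_mulVec_eq {Z : Matrix (Fin m) (Fin r) ℝ} (v : Fin r → ℝ) :
    dotProduct (Z.mulVec v) (Z.mulVec v) = dotProduct ((Zᵀ * Z).mulVec v) v := by
  rw [dotProduct_mulVec (Z.mulVec v) Z v, ← Matrix.mulVec_transpose,
    Matrix.mulVec_mulVec]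

lemma ZtZ_isUnit {Z : Matrix (Fin m) (Fin r) ℝ} (hZrank : Z.rank = r) : IsUnit (Zᵀ * Z) := by
  have hinj := mulVec_inj_of_rank hZrank
  apply Matrix.mulVec_injective_iff_isUnit.mp
  intro x y hxy
  have hd : (Zᵀ * Z).mulVec (x - y) = 0 := by
    rw [Matrix.mulVec_sub, hxy, sub_self]
  have h0 : dotProduct (Z.mulVec (x - y)) (Z.mulVec (x - y)) = 0 := by
    rw [ZtZ_mulVec_eq, hd, zero_dotProduct]
  have hz : Z.mulVec (x - y) = 0 := by
    have := dot_self_eq (Z.mulVec (x - y))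
    rw [h0] at this
    exact vnorm_eq_zero_iff.mp (by nlinarith [vnorm_nonneg (Z.mulVec (x - y))])
  have h4 : Z.mulVec (x - y) = Z.mulVec 0 := by rw [hz, Matrix.mulVec_zero]
  exact sub_eq_zero.mp (hinj h4)

lemma Zp_mul_Z {Z : Matrix (Fin m) (Fin r) ℝ} {Zp : Matrix (Fin r) (Fin m) ℝ}
    (hZrank : Z.rank = r) (hZp : Zp = (Zᵀ * Z)⁻¹ * Zᵀ) : Zp * Z = 1 := by
  have hu := (Matrix.isUnit_iff_isUnit_det _).mp (ZtZ_isUnit hZrank)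
  rw [hZp, Matrix.mul_assoc]
  exact Matrix.nonsing_inv_mul _ hu

lemma ZtZ_mul_Zp {Z : Matrix (Fin m) (Fin r) ℝ} {Zp : Matrix (Fin r) (Fin m) ℝ}
    (hZrank : Z.rank = r) (hZp : Zp = (Zᵀ * Z)⁻¹ * Zᵀ) : (Zᵀ * Z) * Zp = Zᵀ := by
  have hu := (Matrix.isUnit_iff_isUnit_det _).mp (ZtZ_isUnit hZrank)
  rw [hZp]
  exact Matrix.mul_nonsing_inv_cancel_left _ _ hu

end Mat
section Sigma

variable {m r : ℕ}

lemma vnorm_eq_norm {k : ℕ} (v : Fin k → ℝ) :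
    vnorm v = ‖(WithLp.equiv 2 (Fin k → ℝ)).symm v‖ := by
  rw [EuclideanSpace.norm_eq]
  unfold vnorm
  congr 1
  exact Finset.sum_congr rfl fun i _ => by
    show v i ^ 2 = ‖v i‖ ^ 2
    rw [Real.norm_eq_abs, sq_abs]

lemma sigmaMin_le {Z : Matrix (Fin m) (Fin r) ℝ} (v : Fin r → ℝ) :
    sigmaMin Z * vnorm v ≤ vnorm (Z.mulVec v) := by
  by_cases hv : v = 0
  · simp [hv, vnorm_zero, Matrix.mulVec_zero, vnorm_nonneg]
  · have hvpos := vnorm_pos_of_ne hv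
    set u : Fin r → ℝ := (vnorm v)⁻¹ • v with hu
    have hnu : vnorm u = 1 := by
      rw [hu, vnorm_smul, abs_of_nonneg (inv_nonneg.mpr (vnorm_nonneg v))]
      field_simp
    have hbdd : BddBelow {x | ∃ v : Fin r → ℝ, vnorm v = 1 ∧ x = vnorm (Z.mulVec v)} := by
      refine ⟨0, fun x hx => ?_⟩
      obtain ⟨w, -, rfl⟩ := hx
      exact vnorm_nonneg _
    have hmem : vnorm (Z.mulVec u) ∈ {x | ∃ v : Fin r → ℝ, vnorm v = 1 ∧ x = vnorm (Z.mulVec v)} :=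
      ⟨u, hnu, rfl⟩
    have h1 : sigmaMin Z ≤ vnorm (Z.mulVec u) := csInf_le hbdd hmem
    have h2 : vnorm (Z.mulVec u) = (vnorm v)⁻¹ * vnorm (Z.mulVec v) := by
      rw [hu, Matrix.mulVec_smul, vnorm_smul, abs_of_nonneg (inv_nonneg.mpr (vnorm_nonneg v))]
    rw [h2] at h1
    have := mul_le_mul_of_nonneg_right h1 (le_of_lt hvpos)
    calc sigmaMin Z * vnorm v ≤ (vnorm v)⁻¹ * vnorm (Z.mulVec v) * vnorm v := this
      _ = vnorm (Z.mulVec v) := by field_simp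

lemma sigmaMin_pos {Z : Matrix (Fin m) (Fin r) ℝ} (hr : 0 < r)
    (hinj : Function.Injective Z.mulVec) : 0 < sigmaMin Z := by
  haveI : Nonempty (Fin r) := ⟨⟨0, hr⟩⟩
  haveI : Nontrivial (EuclideanSpace ℝ (Fin r)) := by
    refine ⟨(WithLp.equiv 2 (Fin r → ℝ)).symm 0, (WithLp.equiv 2 (Fin r → ℝ)).symm 1, fun hc => ?_⟩
    have := (WithLp.equiv 2 (Fin r → ℝ)).symm.injective hc
    have h0 := congrFun this ⟨0, hr⟩
    norm_num at h0
  set E := EuclideanSpace ℝ (Fin r)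
  let L : E →ₗ[ℝ] EuclideanSpace ℝ (Fin m) :=
    (WithLp.linearEquiv 2 ℝ (Fin m → ℝ)).symm.toLinearMap ∘ₗ Z.mulVecLin ∘ₗ
      (WithLp.linearEquiv 2 ℝ (Fin r → ℝ)).toLinearMap
  have hf : ∀ v : E, ‖L v‖ = vnorm (Z.mulVec ((WithLp.equiv 2 (Fin r → ℝ)) v)) := by
    intro v
    rw [vnorm_eq_norm]
    rfl
  have hcont : Continuous fun v : E => ‖L v‖ :=
    (LinearMap.continuous_of_finiteDimensional L).norm
  obtain ⟨v₀, hv₀mem, hmin⟩ := (isCompact_sphere (0 : E) 1).exists_isMinOn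
    (NormedSpace.sphere_nonempty.mpr zero_le_one) hcont.continuousOn
  have hv₀ : v₀ ≠ 0 := by
    intro hc
    rw [Metric.mem_sphere, hc, dist_self] at hv₀mem
    norm_num at hv₀mem
  have hLv₀ : 0 < ‖L v₀‖ := by
    rw [hf]
    apply vnorm_pos_of_ne
    intro hc
    apply hv₀
    have : Z.mulVec ((WithLp.equiv 2 (Fin r → ℝ)) v₀) = Z.mulVec 0 := by
      rw [hc, Matrix.mulVec_zero]
    have h0 := hinj this
    have : v₀ = (WithLp.equiv 2 (Fin r → ℝ)).symm 0 := by
      rw [← h0]; rfl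
    rw [this]; rfl
  refine lt_of_lt_of_le hLv₀ (le_csInf ?_ ?_)
  · refine ⟨vnorm (Z.mulVec ((WithLp.equiv 2 (Fin r → ℝ)) v₀)), ?_⟩
    refine ⟨(WithLp.equiv 2 (Fin r → ℝ)) v₀, ?_, rfl⟩
    rw [vnorm_eq_norm]
    have : (WithLp.equiv 2 (Fin r → ℝ)).symm ((WithLp.equiv 2 (Fin r → ℝ)) v₀) = v₀ := by rfl
    rw [this]
    rwa [Metric.mem_sphere, dist_zero_right] at hv₀mem
  · rintro x ⟨v, hv1, rfl⟩
    set ve : E := (WithLp.equiv 2 (Fin r → ℝ)).symm v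
    have hve : ve ∈ Metric.sphere (0 : E) 1 := by
      rw [Metric.mem_sphere, dist_zero_right, ← vnorm_eq_norm]
      exact hv1
    have h5 : ‖L v₀‖ ≤ ‖L ve‖ := hmin hve
    rw [hf ve] at h5
    have hvv : (WithLp.equiv 2 (Fin r → ℝ)) ve = v := rfl
    rw [hvv] at h5
    exact h5

end Sigma
section ZpBound

variable {m r : ℕ}

lemma mulVec_Zp_le {Z : Matrix (Fin m) (Fin r) ℝ} {Zp : Matrix (Fin r) (Fin m) ℝ}
    (hZrank : Z.rank = r) (hZp : Zp = (Zᵀ * Z)⁻¹ * Zᵀ) (hr : 0 < r) (w : Fin m → ℝ) :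
    vnorm (Zp.mulVec w) ≤ (sigmaMin Z)⁻¹ * vnorm w := by
  have hσ := sigmaMin_pos hr (mulVec_inj_of_rank hZrank)
  set v := Zp.mulVec w with hv
  -- key : (Zᵀ Z) v = Zᵀ w
  have key : (Zᵀ * Z).mulVec v = Zᵀ.mulVec w := by
    rw [hv, Matrix.mulVec_mulVec, ZtZ_mul_Zp hZrank hZp]
  -- ‖Zv‖² = w ⬝ᵥ Zv
  have hsq : vnorm (Z.mulVec v) ^ 2 = dotProduct w (Z.mulVec v) := by
    rw [← dot_self_eq, ZtZ_mulVec_eq, key, dotProduct_mulVec w Z v,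
      ← Matrix.mulVec_transpose Z w]
  have hZv_le : vnorm (Z.mulVec v) ≤ vnorm w := by
    by_cases h0 : vnorm (Z.mulVec v) = 0
    · rw [h0]; exact vnorm_nonneg w
    · have hpos : 0 < vnorm (Z.mulVec v) := lt_of_le_of_ne (vnorm_nonneg _) (Ne.symm h0)
      have := le_trans (le_abs_self _) (abs_dot_le w (Z.mulVec v))
      nlinarith [hsq]
  have h1 := sigmaMin_le (Z := Z) v
  have h2 : sigmaMin Z * vnorm v ≤ vnorm w := le_trans h1 hZv_le
  rw [← hv] at *
  calc vnorm v = (sigmaMin Z)⁻¹ * (sigmaMin Z * vnorm v) := by field_simp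
    _ ≤ (sigmaMin Z)⁻¹ * vnorm w := by
        exact mul_le_mul_of_nonneg_left h2 (inv_nonneg.mpr (le_of_lt hσ))

end ZpBound
section Rho

variable {n q t : ℕ}

lemma rhoSet_bddBelow (Ψ : Matrix (Fin n) (Fin q) ℝ) (Y : Matrix (Fin q) (Fin t) ℝ) (k : ℕ) :
    BddBelow {x | ∃ w ∈ sparseCone Y k, w ≠ 0 ∧ x = vnorm (Ψ.mulVec w) ^ 2 / vnorm w ^ 2} := by
  refine ⟨0, fun x hx => ?_⟩
  obtain ⟨w, -, -, rfl⟩ := hx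
  exact div_nonneg (sq_nonneg _) (sq_nonneg _)

lemma rhoSet_bddAbove (Ψ : Matrix (Fin n) (Fin q) ℝ) (Y : Matrix (Fin q) (Fin t) ℝ) (k : ℕ) :
    BddAbove {x | ∃ w ∈ sparseCone Y k, w ≠ 0 ∧ x = vnorm (Ψ.mulVec w) ^ 2 / vnorm w ^ 2} := by
  refine ⟨∑ i, ∑ j, Ψ i j ^ 2, fun x hx => ?_⟩
  obtain ⟨w, -, hw0, rfl⟩ := hx
  have hpos : 0 < vnorm w ^ 2 := pow_pos (vnorm_pos_of_ne hw0) 2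
  rw [div_le_iff₀ hpos]
  exact mulVec_sq_le Ψ w

lemma rhoMinus0_mul_le (Ψ : Matrix (Fin n) (Fin q) ℝ) (Y : Matrix (Fin q) (Fin t) ℝ) (k : ℕ)
    {w : Fin q → ℝ} (hw : w ∈ sparseCone Y k) (hw0 : w ≠ 0) :
    rhoMinus0 Ψ Y k * vnorm w ^ 2 ≤ vnorm (Ψ.mulVec w) ^ 2 := by
  have hpos : 0 < vnorm w ^ 2 := pow_pos (vnorm_pos_of_ne hw0) 2
  have hle : rhoMinus0 Ψ Y k ≤ vnorm (Ψ.mulVec w) ^ 2 / vnorm w ^ 2 :=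
    csInf_le (rhoSet_bddBelow Ψ Y k) ⟨w, hw, hw0, rfl⟩
  calc rhoMinus0 Ψ Y k * vnorm w ^ 2 ≤ (vnorm (Ψ.mulVec w) ^ 2 / vnorm w ^ 2) * vnorm w ^ 2 :=
        mul_le_mul_of_nonneg_right hle (le_of_lt hpos)
    _ = vnorm (Ψ.mulVec w) ^ 2 := by rw [div_mul_cancel₀ _ hpos.ne']

lemma le_rhoPlus0_mul (Ψ : Matrix (Fin n) (Fin q) ℝ) (Y : Matrix (Fin q) (Fin t) ℝ) (k : ℕ)
    {w : Fin q → ℝ} (hw : w ∈ sparseCone Y k) :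
    vnorm (Ψ.mulVec w) ^ 2 ≤ rhoPlus0 Ψ Y k * vnorm w ^ 2 := by
  by_cases hw0 : w = 0
  · subst hw0
    simp [Matrix.mulVec_zero, vnorm_zero]
  · have hpos : 0 < vnorm w ^ 2 := pow_pos (vnorm_pos_of_ne hw0) 2
    have hle : vnorm (Ψ.mulVec w) ^ 2 / vnorm w ^ 2 ≤ rhoPlus0 Ψ Y k :=
      le_csSup (rhoSet_bddAbove Ψ Y k) ⟨w, hw, hw0, rfl⟩
    calc vnorm (Ψ.mulVec w) ^ 2 = (vnorm (Ψ.mulVec w) ^ 2 / vnorm w ^ 2) * vnorm w ^ 2 := by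
          rw [div_mul_cancel₀ _ hpos.ne']
      _ ≤ rhoPlus0 Ψ Y k * vnorm w ^ 2 := mul_le_mul_of_nonneg_right hle (le_of_lt hpos)

lemma rhoPlus0_nonneg (Ψ : Matrix (Fin n) (Fin q) ℝ) (Y : Matrix (Fin q) (Fin t) ℝ) (k : ℕ)
    {w : Fin q → ℝ} (hw : w ∈ sparseCone Y k) (hw0 : w ≠ 0) : 0 ≤ rhoPlus0 Ψ Y k := by
  have hle : vnorm (Ψ.mulVec w) ^ 2 / vnorm w ^ 2 ≤ rhoPlus0 Ψ Y k :=
    le_csSup (rhoSet_bddAbove Ψ Y k) ⟨w, hw, hw0, rfl⟩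
  exact le_trans (div_nonneg (sq_nonneg _) (sq_nonneg _)) hle

lemma cross_le (Ψ : Matrix (Fin n) (Fin q) ℝ) (Y : Matrix (Fin q) (Fin t) ℝ) (k : ℕ)
    {a u : Fin q → ℝ} (ha : a ∈ sparseCone Y k) (hu : u ∈ sparseCone Y k)
    (hρ : 0 ≤ rhoPlus0 Ψ Y k) :
    |dotProduct (Ψ.mulVec a) (Ψ.mulVec u)| ≤ rhoPlus0 Ψ Y k * vnorm a * vnorm u := by
  have hXa : vnorm (Ψ.mulVec a) ≤ Real.sqrt (rhoPlus0 Ψ Y k) * vnorm a := by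
    have h1 := le_rhoPlus0_mul Ψ Y k ha
    have h2 := Real.sqrt_le_sqrt h1
    rwa [Real.sqrt_sq (vnorm_nonneg _), Real.sqrt_mul hρ, Real.sqrt_sq (vnorm_nonneg _)] at h2
  have hXu : vnorm (Ψ.mulVec u) ≤ Real.sqrt (rhoPlus0 Ψ Y k) * vnorm u := by
    have h1 := le_rhoPlus0_mul Ψ Y k hu
    have h2 := Real.sqrt_le_sqrt h1
    rwa [Real.sqrt_sq (vnorm_nonneg _), Real.sqrt_mul hρ, Real.sqrt_sq (vnorm_nonneg _)] at h2
  calc |dotProduct (Ψ.mulVec a) (Ψ.mulVec u)| ≤ vnorm (Ψ.mulVec a) * vnorm (Ψ.mulVec u) :=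
        abs_dot_le _ _
    _ ≤ (Real.sqrt (rhoPlus0 Ψ Y k) * vnorm a) * (Real.sqrt (rhoPlus0 Ψ Y k) * vnorm u) := by
        exact mul_le_mul hXa hXu (vnorm_nonneg _) (mul_nonneg (Real.sqrt_nonneg _) (vnorm_nonneg _))
    _ = (Real.sqrt (rhoPlus0 Ψ Y k) * Real.sqrt (rhoPlus0 Ψ Y k)) * vnorm a * vnorm u := by ring
    _ = rhoPlus0 Ψ Y k * vnorm a * vnorm u := by
        rw [Real.mul_self_sqrt hρ]

lemma mem_sparseCone_restr {r' m' : ℕ} (Zp : Matrix (Fin r') (Fin m') ℝ) (k : ℕ)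
    (T : Finset (Fin m')) (hT : T.card ≤ k) (w : Fin m' → ℝ) :
    Zp.mulVec (restr T w) ∈ sparseCone Zp k :=
  ⟨restr T w, le_trans (Finset.card_le_card (suppSet_restr_subset T w)) hT, rfl⟩

end Rho
section Cone

lemma h_eq_Zp_Zh {m r : ℕ} {Z : Matrix (Fin m) (Fin r) ℝ} {Zp : Matrix (Fin r) (Fin m) ℝ}
    (hZrank : Z.rank = r) (hZp : Zp = (Zᵀ * Z)⁻¹ * Zᵀ) (h : Fin r → ℝ) :
    Zp.mulVec (Z.mulVec h) = h := by
  rw [Matrix.mulVec_mulVec, Zp_mul_Z hZrank hZp, Matrix.one_mulVec]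

lemma cone_condition {n r m : ℕ} (hm : 0 < m)
    (X : Matrix (Fin n) (Fin r) ℝ) (Z : Matrix (Fin m) (Fin r) ℝ)
    (hZrank : Z.rank = r)
    (Zp : Matrix (Fin r) (Fin m) ℝ) (hZp : Zp = (Zᵀ * Z)⁻¹ * Zᵀ)
    (y : Fin n → ℝ) (lam : ℝ) (hlam : 0 < lam)
    (βstar βhat : Fin r → ℝ)
    (hmin : ∀ β : Fin r → ℝ,
      (1 / 2) * vnorm (X.mulVec βhat - y) ^ 2 + lam * vnorm1 (Z.mulVec βhat) ≤
        (1 / 2) * vnorm (X.mulVec β - y) ^ 2 + lam * vnorm1 (Z.mulVec β))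
    (h : Fin r → ℝ) (hh : h = βhat - βstar)
    (T₀ : Finset (Fin m)) (hT₀ : T₀ = suppSet (Z.mulVec βstar))
    (hfeas : vnormInf (Zpᵀ.mulVec (Xᵀ.mulVec (X.mulVec βstar - y))) < lam / 2) :
    vnorm1 (restr T₀ᶜ (Z.mulVec h)) ≤ 3 * vnorm1 (restr T₀ (Z.mulVec h)) := by
  set g := Z.mulVec h with hg
  set e := X.mulVec βstar - y with he
  set b := Z.mulVec βstar with hb
  have hβ : βhat = βstar + h := by rw [hh]; abel
  -- residual decomposition
  have hres : X.mulVec βhat - y = e + X.mulVec h := by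
    rw [hβ, Matrix.mulVec_add, he]; abel
  have hexp : vnorm (X.mulVec βhat - y) ^ 2
      = vnorm e ^ 2 + 2 * dotProduct e (X.mulVec h) + vnorm (X.mulVec h) ^ 2 := by
    rw [hres, vnorm_add_sq]
  -- from optimality at βstar
  have hopt := hmin βstar
  rw [hexp] at hopt
  -- dot product lower bound
  have hdot : dotProduct e (X.mulVec h)
      = dotProduct (Zpᵀ.mulVec (Xᵀ.mulVec e)) g := by
    rw [dotProduct_mulVec e X h, ← Matrix.mulVec_transpose X e,
      ← h_eq_Zp_Zh hZrank hZp h, dotProduct_mulVec _ Zp _,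
      ← Matrix.mulVec_transpose Zp]
  have habs : |dotProduct e (X.mulVec h)| ≤ (lam / 2) * vnorm1 g := by
    rw [hdot]
    calc |dotProduct (Zpᵀ.mulVec (Xᵀ.mulVec e)) g|
        ≤ vnormInf (Zpᵀ.mulVec (Xᵀ.mulVec e)) * vnorm1 g := by
          exact abs_dot_le_inf_one _ _ hm
      _ ≤ (lam / 2) * vnorm1 g :=
          mul_le_mul_of_nonneg_right (le_of_lt hfeas) (vnorm1_nonneg g)
  have hdotlb : -((lam / 2) * vnorm1 g) ≤ dotProduct e (X.mulVec h) :=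
    neg_le_of_abs_le habs |>.trans_eq' rfl
  -- ℓ¹ splittings
  have hsplit : ∀ v : Fin m → ℝ, vnorm1 v = vnorm1 (restr T₀ v) + vnorm1 (restr T₀ᶜ v) := by
    intro v
    rw [vnorm1, vnorm1_restr, vnorm1_restr, Finset.sum_add_sum_compl]
  have hb0 : ∀ i ∈ T₀ᶜ, b i = 0 := by
    intro i hi
    rw [Finset.mem_compl, hT₀, suppSet, Finset.mem_filter] at hi
    push_neg at hi
    exact hi (Finset.mem_univ i)
  have hZβhat : Z.mulVec βhat = b + g := by
    rw [hβ, Matrix.mulVec_add]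
  -- ‖Zβ*‖₁ − ‖Zβ̂‖₁ ≤ S₀ − Sc
  have hl1 : vnorm1 b - vnorm1 (Z.mulVec βhat)
      ≤ vnorm1 (restr T₀ g) - vnorm1 (restr T₀ᶜ g) := by
    rw [hZβhat, hsplit b, hsplit (b + g)]
    have h1 : vnorm1 (restr T₀ b) - vnorm1 (restr T₀ (b + g)) ≤ vnorm1 (restr T₀ g) := by
      rw [vnorm1_restr, vnorm1_restr, vnorm1_restr, ← Finset.sum_sub_distrib]
      refine Finset.sum_le_sum fun i _ => ?_
      have := abs_sub_abs_le_abs_sub (b i) ((b + g) i)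
      simpa using this.trans (by simp [abs_sub_comm])
    have h2 : vnorm1 (restr T₀ᶜ b) = 0 := by
      rw [vnorm1_restr]
      exact Finset.sum_eq_zero fun i hi => by rw [hb0 i hi, abs_zero]
    have h3 : vnorm1 (restr T₀ᶜ (b + g)) = vnorm1 (restr T₀ᶜ g) := by
      rw [vnorm1_restr, vnorm1_restr]
      exact Finset.sum_congr rfl fun i hi => by rw [Pi.add_apply, hb0 i hi, zero_add]
    linarith
  -- combine
  have hXh := sq_nonneg (vnorm (X.mulVec h))
  have hcomb : -((lam / 2) * vnorm1 g) ≤ lam * (vnorm1 b - vnorm1 (Z.mulVec βhat)) := by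
    nlinarith [hdotlb, hopt]
  have hfinal : -((lam / 2) * (vnorm1 (restr T₀ g) + vnorm1 (restr T₀ᶜ g)))
      ≤ lam * (vnorm1 (restr T₀ g) - vnorm1 (restr T₀ᶜ g)) := by
    rw [← hsplit g]
    exact hcomb.trans (mul_le_mul_of_nonneg_left hl1 (le_of_lt hlam))
  nlinarith [hfinal, hlam]

end Cone
section Block

variable {m : ℕ}

/-- Decomposition of `g` into `T01` part and the tail blocks. -/
lemma decomp_g (T₀ : Finset (Fin m)) (J : ℕ) (hJ : 1 ≤ J) (T : ℕ → Finset (Fin m))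
    (hUnion : (Finset.Icc 1 J).biUnion T = T₀ᶜ)
    (hDisj : ∀ i ∈ Finset.Icc 1 J, ∀ j ∈ Finset.Icc 1 J, i ≠ j → Disjoint (T i) (T j))
    (T01 : Finset (Fin m)) (hT01 : T01 = T₀ ∪ T 1) (g : Fin m → ℝ) :
    restr T01 g + ∑ j ∈ Finset.Icc 2 J, restr (T j) g = g := by
  have hTsub : ∀ j ∈ Finset.Icc 1 J, T j ⊆ T₀ᶜ := by
    intro j hj
    rw [← hUnion]
    exact Finset.subset_biUnion_of_mem T hj
  funext i
  simp only [Pi.add_apply, Finset.sum_apply]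
  by_cases hi0 : i ∈ T₀
  · have hiT01 : i ∈ T01 := by rw [hT01]; exact Finset.mem_union_left _ hi0
    have hz : ∀ j ∈ Finset.Icc 2 J, restr (T j) g i = 0 := by
      intro j hj
      rw [Finset.mem_Icc] at hj
      have hj1 : j ∈ Finset.Icc 1 J := Finset.mem_Icc.mpr ⟨by omega, hj.2⟩
      have : i ∉ T j := fun hc => (Finset.mem_compl.mp (hTsub j hj1 hc)) hi0
      simp [restr, this]
    rw [Finset.sum_eq_zero hz]
    simp [restr, hiT01]
  · have hicompl : i ∈ T₀ᶜ := Finset.mem_compl.mpr hi0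
    rw [← hUnion] at hicompl
    obtain ⟨j0, hj0mem, hij0⟩ := Finset.mem_biUnion.mp hicompl
    by_cases hj01 : j0 = 1
    · subst hj01
      have hiT01 : i ∈ T01 := by rw [hT01]; exact Finset.mem_union_right _ hij0
      have hz : ∀ j ∈ Finset.Icc 2 J, restr (T j) g i = 0 := by
        intro j hj
        rw [Finset.mem_Icc] at hj
        have hj1 : j ∈ Finset.Icc 1 J := Finset.mem_Icc.mpr ⟨by omega, hj.2⟩
        have hdisj := hDisj 1 hj0mem j hj1 (by omega)
        have : i ∉ T j := fun hc => (Finset.disjoint_left.mp hdisj) hij0 hc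
        simp [restr, this]
      rw [Finset.sum_eq_zero hz]
      simp [restr, hiT01]
    · have hj0mem' := Finset.mem_Icc.mp hj0mem
      have hiT1 : i ∉ T 1 := by
        intro hc
        have h1mem : (1 : ℕ) ∈ Finset.Icc 1 J := Finset.mem_Icc.mpr ⟨le_refl 1, hJ⟩
        exact (Finset.disjoint_left.mp (hDisj j0 hj0mem 1 h1mem hj01)) hij0 hc
      have hiT01 : i ∉ T01 := by
        rw [hT01, Finset.mem_union]
        push_neg
        exact ⟨hi0, hiT1⟩
      have hsum : ∑ j ∈ Finset.Icc 2 J, restr (T j) g i = g i := by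
        rw [Finset.sum_eq_single_of_mem j0 (Finset.mem_Icc.mpr ⟨by omega, hj0mem'.2⟩)]
        · simp [restr, hij0]
        · intro b hb hbj0
          rw [Finset.mem_Icc] at hb
          have hbmem : b ∈ Finset.Icc 1 J := Finset.mem_Icc.mpr ⟨by omega, hb.2⟩
          have : i ∉ T b := fun hc =>
            (Finset.disjoint_left.mp (hDisj j0 hj0mem b hbmem (Ne.symm hbj0))) hij0 hc
          simp [restr, this]
      rw [hsum]
      simp [restr, hiT01]

/-- Per-block bound. -/
lemma block_bound (J : ℕ) (T : ℕ → Finset (Fin m)) (l : ℕ) (hl : 0 < l)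
    (hCard : ∀ j, 1 ≤ j → j < J → (T j).card = l)
    (hCardLast : (T J).card ≤ l)
    (g : Fin m → ℝ)
    (hOrder : ∀ j, 2 ≤ j → j ≤ J → ∀ a ∈ T j, ∀ b ∈ T (j - 1), |g a| ≤ |g b|)
    (j : ℕ) (hj2 : 2 ≤ j) (hjJ : j ≤ J) :
    vnorm (restr (T j) g) ≤ vnorm1 (restr (T (j - 1)) g) / Real.sqrt (l : ℝ) := by
  set S := vnorm1 (restr (T (j - 1)) g) with hS
  have hSnn : 0 ≤ S := vnorm1_nonneg _
  have hcard1 : (T (j - 1)).card = l := hCard (j - 1) (by omega) (by omega)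
  have hbound : ∀ a ∈ T j, |g a| ≤ S / (l : ℝ) := by
    intro a ha
    have hsum : (l : ℝ) * |g a| ≤ S := by
      rw [hS, vnorm1_restr]
      calc (l : ℝ) * |g a| = ∑ _b ∈ T (j - 1), |g a| := by
            rw [Finset.sum_const, hcard1, nsmul_eq_mul]
        _ ≤ ∑ b ∈ T (j - 1), |g b| :=
            Finset.sum_le_sum fun b hb => hOrder j hj2 hjJ a ha b hb
    have hlpos : (0 : ℝ) < l := by exact_mod_cast hl
    rw [le_div_iff₀ hlpos, mul_comm]
    exact hsum
  have hcardj : ((T j).card : ℝ) ≤ (l : ℝ) := by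
    rcases eq_or_lt_of_le hjJ with heq | hlt
    · subst heq; exact_mod_cast hCardLast
    · exact_mod_cast le_of_eq (hCard j (by omega) hlt)
  have hsq : vnorm (restr (T j) g) ^ 2 ≤ S ^ 2 / (l : ℝ) := by
    rw [vnorm_sq_restr]
    have hlpos : (0 : ℝ) < l := by exact_mod_cast hl
    calc ∑ i ∈ T j, g i ^ 2 ≤ ∑ _i ∈ T j, (S / (l : ℝ)) ^ 2 := by
          refine Finset.sum_le_sum fun i hi => ?_
          rw [← sq_abs (g i)]
          exact pow_le_pow_left₀ (abs_nonneg _) (hbound i hi) 2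
      _ = ((T j).card : ℝ) * (S / (l : ℝ)) ^ 2 := by rw [Finset.sum_const, nsmul_eq_mul]
      _ ≤ (l : ℝ) * (S / (l : ℝ)) ^ 2 :=
          mul_le_mul_of_nonneg_right hcardj (sq_nonneg _)
      _ = S ^ 2 / (l : ℝ) := by field_simp
  have h2 := Real.sqrt_le_sqrt hsq
  rwa [Real.sqrt_sq (vnorm_nonneg _), Real.sqrt_div (sq_nonneg S), Real.sqrt_sq hSnn] at h2

end Block
section Tail

variable {m : ℕ}

lemma tail_sum_bound (T₀ : Finset (Fin m)) (J : ℕ) (hJ : 1 ≤ J) (T : ℕ → Finset (Fin m))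
    (hUnion : (Finset.Icc 1 J).biUnion T = T₀ᶜ)
    (hDisj : ∀ i ∈ Finset.Icc 1 J, ∀ j ∈ Finset.Icc 1 J, i ≠ j → Disjoint (T i) (T j))
    (l : ℕ) (hl : 0 < l)
    (hCard : ∀ j, 1 ≤ j → j < J → (T j).card = l)
    (hCardLast : (T J).card ≤ l)
    (g : Fin m → ℝ)
    (hOrder : ∀ j, 2 ≤ j → j ≤ J → ∀ a ∈ T j, ∀ b ∈ T (j - 1), |g a| ≤ |g b|) :
    ∑ j ∈ Finset.Icc 2 J, vnorm (restr (T j) g)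
      ≤ vnorm1 (restr T₀ᶜ g) / Real.sqrt (l : ℝ) := by
  have hsqrtpos : 0 < Real.sqrt (l : ℝ) := Real.sqrt_pos.mpr (by exact_mod_cast hl)
  have step1 : ∑ j ∈ Finset.Icc 2 J, vnorm (restr (T j) g)
      ≤ ∑ j ∈ Finset.Icc 2 J, vnorm1 (restr (T (j - 1)) g) / Real.sqrt (l : ℝ) :=
    Finset.sum_le_sum fun j hj => by
      rw [Finset.mem_Icc] at hj
      exact block_bound J T l hl hCard hCardLast g hOrder j hj.1 hj.2
  have step2 : ∑ j ∈ Finset.Icc 2 J, vnorm1 (restr (T (j - 1)) g)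
      = ∑ j ∈ Finset.Icc 1 (J - 1), vnorm1 (restr (T j) g) := by
    have himg : Finset.Icc 1 (J - 1) = (Finset.Icc 2 J).image (· - 1) := by
      ext x
      simp only [Finset.mem_image, Finset.mem_Icc]
      constructor
      · intro hx; exact ⟨x + 1, by omega, by omega⟩
      · rintro ⟨y, hy, rfl⟩; omega
    rw [himg, Finset.sum_image]
    intro x hx y hy hxy
    simp only [Finset.coe_Icc, Set.mem_Icc] at hx hy hxy
    omega
  have step3 : ∑ j ∈ Finset.Icc 1 (J - 1), vnorm1 (restr (T j) g)
      ≤ ∑ j ∈ Finset.Icc 1 J, vnorm1 (restr (T j) g) :=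
    Finset.sum_le_sum_of_subset_of_nonneg
      (Finset.Icc_subset_Icc le_rfl (by omega))
      (fun j _ _ => vnorm1_nonneg _)
  have step4 : ∑ j ∈ Finset.Icc 1 J, vnorm1 (restr (T j) g) = vnorm1 (restr T₀ᶜ g) := by
    rw [vnorm1_restr, ← hUnion, Finset.sum_biUnion]
    · exact Finset.sum_congr rfl fun j _ => vnorm1_restr _ g
    · intro i hi j hj hij
      exact hDisj i (Finset.mem_coe.mp hi) j (Finset.mem_coe.mp hj) hij
  calc ∑ j ∈ Finset.Icc 2 J, vnorm (restr (T j) g)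
      ≤ ∑ j ∈ Finset.Icc 2 J, vnorm1 (restr (T (j - 1)) g) / Real.sqrt (l : ℝ) := step1
    _ = (∑ j ∈ Finset.Icc 2 J, vnorm1 (restr (T (j - 1)) g)) / Real.sqrt (l : ℝ) := by
        rw [Finset.sum_div]
    _ ≤ vnorm1 (restr T₀ᶜ g) / Real.sqrt (l : ℝ) := by
        apply div_le_div_of_nonneg_right ?_ hsqrtpos.le
        rw [step2]
        exact step3.trans (le_of_eq step4)

end Tail
section SumLems

theorem dot_sum' {n : ℕ} (a : Fin n → ℝ) (s : Finset ℕ) (v : ℕ → Fin n → ℝ) :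
    dotProduct a (∑ j ∈ s, v j) = ∑ j ∈ s, dotProduct a (v j) := by
  simp only [dotProduct, Finset.sum_apply, Finset.mul_sum]
  rw [Finset.sum_comm]

theorem mulVec_sum' {n m : ℕ} (A : Matrix (Fin n) (Fin m) ℝ) (s : Finset ℕ) (v : ℕ → Fin m → ℝ) :
    A.mulVec (∑ j ∈ s, v j) = ∑ j ∈ s, A.mulVec (v j) := by
  funext i
  rw [Finset.sum_apply]
  exact dot_sum' (A i) s v

end SumLems
/-- In the simplified dictionary-LASSO setting with the block partition,
`‖Xh‖² ≥ W_{Xh,1}‖Z⁺(Zh)_{T₀₁}‖² − W_{Xh,2}‖Z⁺(Zh)_{T₀₁}‖·‖(Zh)_{T₀₁}‖`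
where `W_{Xh,1} = ρ⁻_{X,Z⁺}(s+l)`, `W_{Xh,2} = 6σ_min(Z)⁻¹ρ⁺_{X,Z⁺}(s+l)√(s/l)`,
and `T₀₁ = T₀ ∪ T₁`. -/
theorem statement3 {n r m : ℕ} (hn : 0 < n) (hr : 0 < r) (hm : 0 < m)
    (X : Matrix (Fin n) (Fin r) ℝ) (Z : Matrix (Fin m) (Fin r) ℝ)
    (hZrank : Z.rank = r)
    (Zp : Matrix (Fin r) (Fin m) ℝ) (hZp : Zp = (Zᵀ * Z)⁻¹ * Zᵀ)
    (y : Fin n → ℝ) (lam : ℝ) (hlam : 0 < lam)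
    (βstar βhat : Fin r → ℝ)
    (hmin : ∀ β : Fin r → ℝ,
      (1 / 2) * vnorm (X.mulVec βhat - y) ^ 2 + lam * vnorm1 (Z.mulVec βhat) ≤
        (1 / 2) * vnorm (X.mulVec β - y) ^ 2 + lam * vnorm1 (Z.mulVec β))
    (h : Fin r → ℝ) (hh : h = βhat - βstar)
    (T₀ : Finset (Fin m)) (hT₀ : T₀ = suppSet (Z.mulVec βstar))
    (s : ℕ) (hs : s = T₀.card) (hs1 : 1 ≤ s)
    (hfeas : vnormInf (Zpᵀ.mulVec (Xᵀ.mulVec (X.mulVec βstar - y))) < lam / 2)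
    -- the block partition of `T₀ᶜ` into `T 1, …, T J`
    (l : ℕ) (hl : 0 < l) (J : ℕ) (hJ : 1 ≤ J) (T : ℕ → Finset (Fin m))
    (hUnion : (Finset.Icc 1 J).biUnion T = T₀ᶜ)
    (hDisj : ∀ i ∈ Finset.Icc 1 J, ∀ j ∈ Finset.Icc 1 J, i ≠ j → Disjoint (T i) (T j))
    (hCard : ∀ j, 1 ≤ j → j < J → (T j).card = l)
    (hCardLast : (T J).card ≤ l)
    (hOrder : ∀ j, 2 ≤ j → j ≤ J → ∀ a ∈ T j, ∀ b ∈ T (j - 1),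
      |Z.mulVec h a| ≤ |Z.mulVec h b|)
    (T01 : Finset (Fin m)) (hT01 : T01 = T₀ ∪ T 1) :
    vnorm (X.mulVec h) ^ 2 ≥
      rhoMinus0 X Zp (s + l) * vnorm (Zp.mulVec (restr T01 (Z.mulVec h))) ^ 2 -
        (6 * (sigmaMin Z)⁻¹ * rhoPlus0 X Zp (s + l) * Real.sqrt ((s : ℝ) / (l : ℝ))) *
          vnorm (Zp.mulVec (restr T01 (Z.mulVec h))) * vnorm (restr T01 (Z.mulVec h)) := by
  set g := Z.mulVec h with hg
  set w01 := restr T01 g with hw01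
  set a := Zp.mulVec w01 with ha
  by_cases ha0 : a = 0
  · rw [ha0, vnorm_zero]
    ring_nf
    positivity
  -- nontrivial case
  have hσ : 0 < sigmaMin Z := sigmaMin_pos hr (mulVec_inj_of_rank hZrank)
  have hσinv : (0:ℝ) ≤ (sigmaMin Z)⁻¹ := inv_nonneg.mpr hσ.le
  -- cardinalities
  have hcardT1 : (T 1).card ≤ l := by
    rcases eq_or_lt_of_le hJ with heq | hlt
    · rw [← heq] at hCardLast; exact hCardLast
    · exact le_of_eq (hCard 1 le_rfl hlt)
  have hcardT01 : T01.card ≤ s + l := by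
    calc T01.card ≤ T₀.card + (T 1).card := hT01 ▸ Finset.card_union_le _ _
      _ ≤ s + l := by rw [hs]; omega
  have hmemA : a ∈ sparseCone Zp (s + l) := mem_sparseCone_restr Zp (s + l) T01 hcardT01 g
  have hρpos : 0 ≤ rhoPlus0 X Zp (s + l) := rhoPlus0_nonneg X Zp (s + l) hmemA ha0
  -- tail blocks
  set u : ℕ → Fin r → ℝ := fun j => Zp.mulVec (restr (T j) g) with hu
  have hcardTj : ∀ j ∈ Finset.Icc 2 J, (T j).card ≤ s + l := by
    intro j hj
    rw [Finset.mem_Icc] at hj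
    rcases eq_or_lt_of_le hj.2 with heq | hlt
    · subst heq; omega
    · have := hCard j (by omega) hlt; omega
  have hmemU : ∀ j ∈ Finset.Icc 2 J, u j ∈ sparseCone Zp (s + l) := fun j hj =>
    mem_sparseCone_restr Zp (s + l) (T j) (hcardTj j hj) g
  -- decomposition
  have hdec := decomp_g T₀ J hJ T hUnion hDisj T01 hT01 g
  have hhdec : h = a + ∑ j ∈ Finset.Icc 2 J, u j := by
    have h1 : h = Zp.mulVec g := (h_eq_Zp_Zh hZrank hZp h).symm
    rw [h1, ← hdec, Matrix.mulVec_add, mulVec_sum']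
  set bvec : Fin r → ℝ := ∑ j ∈ Finset.Icc 2 J, u j with hbvec
  have hXh : X.mulVec h = X.mulVec a + X.mulVec bvec := by
    rw [hhdec, Matrix.mulVec_add]
  have hexp : vnorm (X.mulVec h) ^ 2 = vnorm (X.mulVec a) ^ 2
      + 2 * dotProduct (X.mulVec a) (X.mulVec bvec) + vnorm (X.mulVec bvec) ^ 2 := by
    rw [hXh, vnorm_add_sq]
  -- lower bound for ‖Xa‖²
  have hminus := rhoMinus0_mul_le X Zp (s + l) hmemA ha0
  -- cross term
  have hcross : |dotProduct (X.mulVec a) (X.mulVec bvec)|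
      ≤ rhoPlus0 X Zp (s + l) * vnorm a * (∑ j ∈ Finset.Icc 2 J, vnorm (u j)) := by
    have h1 : dotProduct (X.mulVec a) (X.mulVec bvec)
        = ∑ j ∈ Finset.Icc 2 J, dotProduct (X.mulVec a) (X.mulVec (u j)) := by
      rw [hbvec, mulVec_sum', dot_sum']
    rw [h1]
    calc |∑ j ∈ Finset.Icc 2 J, dotProduct (X.mulVec a) (X.mulVec (u j))|
        ≤ ∑ j ∈ Finset.Icc 2 J, |dotProduct (X.mulVec a) (X.mulVec (u j))| :=
          Finset.abs_sum_le_sum_abs _ _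
      _ ≤ ∑ j ∈ Finset.Icc 2 J, rhoPlus0 X Zp (s + l) * vnorm a * vnorm (u j) :=
          Finset.sum_le_sum fun j hj => cross_le X Zp (s + l) hmemA (hmemU j hj) hρpos
      _ = rhoPlus0 X Zp (s + l) * vnorm a * (∑ j ∈ Finset.Icc 2 J, vnorm (u j)) := by
          rw [Finset.mul_sum]
  -- bound on Σ‖u_j‖
  have hsumU : ∑ j ∈ Finset.Icc 2 J, vnorm (u j)
      ≤ (sigmaMin Z)⁻¹ * (∑ j ∈ Finset.Icc 2 J, vnorm (restr (T j) g)) := by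
    rw [Finset.mul_sum]
    exact Finset.sum_le_sum fun j _ => mulVec_Zp_le hZrank hZp hr (restr (T j) g)
  have htail := tail_sum_bound T₀ J hJ T hUnion hDisj l hl hCard hCardLast g hOrder
  have hcone := cone_condition hm X Z hZrank Zp hZp y lam hlam βstar βhat hmin h hh T₀ hT₀ hfeas
  have hl2l1 : vnorm1 (restr T₀ g) ≤ Real.sqrt (s : ℝ) * vnorm (restr T₀ g) := by
    have := vnorm1_restr_le T₀ g
    rwa [← hs] at this
  have hmono : vnorm (restr T₀ g) ≤ vnorm w01 :=
    hw01 ▸ vnorm_restr_mono (hT01 ▸ Finset.subset_union_left) g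
  have hsqrt : Real.sqrt ((s : ℝ)) / Real.sqrt (l : ℝ) = Real.sqrt ((s : ℝ) / (l : ℝ)) :=
    (Real.sqrt_div (Nat.cast_nonneg s) (l : ℝ)).symm
  have hsqrtl : 0 < Real.sqrt (l : ℝ) := Real.sqrt_pos.mpr (by exact_mod_cast hl)
  -- combine the tail chain
  have hchain : ∑ j ∈ Finset.Icc 2 J, vnorm (u j)
      ≤ 3 * (sigmaMin Z)⁻¹ * Real.sqrt ((s : ℝ) / (l : ℝ)) * vnorm w01 := by
    have h1 : vnorm1 (restr T₀ᶜ g) / Real.sqrt (l : ℝ)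
        ≤ 3 * (Real.sqrt (s : ℝ) * vnorm w01) / Real.sqrt (l : ℝ) := by
      apply div_le_div_of_nonneg_right ?_ hsqrtl.le
      calc vnorm1 (restr T₀ᶜ g) ≤ 3 * vnorm1 (restr T₀ g) := hcone
        _ ≤ 3 * (Real.sqrt (s : ℝ) * vnorm (restr T₀ g)) := by linarith [hl2l1]
        _ ≤ 3 * (Real.sqrt (s : ℝ) * vnorm w01) := by
            have := mul_le_mul_of_nonneg_left hmono (Real.sqrt_nonneg (s : ℝ))
            linarith
    calc ∑ j ∈ Finset.Icc 2 J, vnorm (u j)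
        ≤ (sigmaMin Z)⁻¹ * (∑ j ∈ Finset.Icc 2 J, vnorm (restr (T j) g)) := hsumU
      _ ≤ (sigmaMin Z)⁻¹ * (vnorm1 (restr T₀ᶜ g) / Real.sqrt (l : ℝ)) :=
          mul_le_mul_of_nonneg_left htail hσinv
      _ ≤ (sigmaMin Z)⁻¹ * (3 * (Real.sqrt (s : ℝ) * vnorm w01) / Real.sqrt (l : ℝ)) :=
          mul_le_mul_of_nonneg_left h1 hσinv
      _ = 3 * (sigmaMin Z)⁻¹ * Real.sqrt ((s : ℝ) / (l : ℝ)) * vnorm w01 := by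
          rw [← hsqrt]; field_simp
  -- final assembly
  have hpa : 0 ≤ vnorm a := vnorm_nonneg a
  have hqn : 0 ≤ vnorm w01 := vnorm_nonneg w01
  have hfin1 : |dotProduct (X.mulVec a) (X.mulVec bvec)|
      ≤ rhoPlus0 X Zp (s + l) * vnorm a *
        (3 * (sigmaMin Z)⁻¹ * Real.sqrt ((s : ℝ) / (l : ℝ)) * vnorm w01) :=
    hcross.trans (mul_le_mul_of_nonneg_left hchain (mul_nonneg hρpos hpa))
  have hnegabs := neg_abs_le (dotProduct (X.mulVec a) (X.mulVec bvec))
  have hXb := sq_nonneg (vnorm (X.mulVec bvec))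
  rw [ge_iff_le, hexp]
  nlinarith [hminus, hfin1, hnegabs, hXb]
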